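/- Let E be a complex Banach space and let g : ℝ³ → E be twice continuously differentiable with compact support contained in ℝ³ ∖ {0}. Then the function s ↦ ∫_{ℝ³} e^{−is|k|} g(k) dk is Bochner integrable on ℝ, and the limit lim_{t→∞} ∫_{−t}^{t} ( ∫_{ℝ³} e^{−is|k|} g(k) dk ) ds exists in E and equals the Bochner integral ∫_{ℝ} ( ∫_{ℝ³} e^{−is|k|} g(k) dk ) ds. -/

import Mathlib

open MeasureTheory Filter Topology

open Metric Set
open scoped Real FourierTransform

set_option maxHeartbeats 1000000

private abbrev V3 := EuclideanSpace ℝ (Fin 3)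

private lemma polar3 {E : Type*} [NormedAddCommGroup E] [NormedSpace ℝ E] [CompleteSpace E]
    (f : V3 → E) (hf : Integrable f) :
    ∫ k, f k = ∫ r in Set.Ioi (0:ℝ),
      (r ^ 2 : ℝ) • ∫ ω : sphere (0 : V3) 1, f (r • (ω : V3))
        ∂(volume : Measure V3).toSphere := by
  set μ : Measure V3 := volume with hμ
  have hdim : Module.finrank ℝ V3 - 1 = 2 := by
    rw [finrank_euclideanSpace_fin]
  have hMP := μ.measurePreserving_homeomorphUnitSphereProd
  rw [hdim] at hMP
  set G : sphere (0 : V3) 1 × Set.Ioi (0:ℝ) → E := fun p => f ((p.2 : ℝ) • (p.1 : V3)) with hG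
  have hGcomp : ∀ x : ({0}ᶜ : Set V3), G (homeomorphUnitSphereProd V3 x) = f x := by
    intro x
    simp only [hG, homeomorphUnitSphereProd_apply_snd_coe, homeomorphUnitSphereProd_apply_fst_coe]
    rw [smul_inv_smul₀ (norm_ne_zero_iff.2 x.2)]
  have hfc : Integrable (fun x : ({0}ᶜ : Set V3) => f x) (μ.comap (↑)) := by
    have hms : MeasurableSet ({0}ᶜ : Set V3) := (measurableSet_singleton _).compl
    have := (MeasurableEmbedding.subtype_coe hms).integrable_map_iff (g := f) (μ := μ.comap (↑))
    rw [map_comap_subtype_coe hms, MeasureTheory.restrict_compl_singleton] at this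
    exact this.mp hf
  have hGint : Integrable G (μ.toSphere.prod (.volumeIoiPow 2)) := by
    rw [← hMP.integrable_comp_emb (Homeomorph.measurableEmbedding _)]
    have : (G ∘ (homeomorphUnitSphereProd V3)) = fun x : ({0}ᶜ : Set V3) => f x :=
      funext fun x => hGcomp x
    rw [this]
    exact hfc
  calc ∫ k, f k ∂μ = ∫ x : ({0}ᶜ : Set V3), f x ∂(μ.comap (↑)) := by
        rw [integral_subtype_comap (measurableSet_singleton _).compl,
          MeasureTheory.restrict_compl_singleton]
    _ = ∫ p, G p ∂(μ.toSphere.prod (.volumeIoiPow 2)) := by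
        rw [← hMP.integral_comp (Homeomorph.measurableEmbedding _) G]
        exact integral_congr_ae (Eventually.of_forall fun x => (hGcomp x).symm)
    _ = ∫ r : Set.Ioi (0:ℝ), (∫ ω, G (ω, r) ∂μ.toSphere) ∂(Measure.volumeIoiPow 2) :=
        integral_prod_symm G hGint
    _ = ∫ r in Set.Ioi (0:ℝ), (r ^ 2 : ℝ) • ∫ ω : sphere (0 : V3) 1, f (r • (ω : V3))
          ∂μ.toSphere := by
        simp only [hG]
        simp only [Measure.volumeIoiPow, ENNReal.ofReal]
        rw [integral_withDensity_eq_integral_smul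
            ((measurable_subtype_coe.pow_const _).real_toNNReal),
          integral_subtype_comap measurableSet_Ioi (fun a : ℝ => (a ^ 2).toNNReal • ∫ ω : sphere (0 : V3) 1, f (a • (ω : V3)) ∂μ.toSphere)]
        refine setIntegral_congr_fun measurableSet_Ioi fun r hr => ?_
        rw [NNReal.smul_def, Real.coe_toNNReal _ (pow_nonneg (le_of_lt hr) _)]

private lemma sphere_avg_contDiff {E : Type*} [NormedAddCommGroup E] [NormedSpace ℝ E]
    [CompleteSpace E] (g : V3 → E) (hg : ContDiff ℝ 2 g) (hgc : HasCompactSupport g) :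
    ContDiff ℝ 2 (fun r : ℝ => ∫ ω : sphere (0 : V3) 1, g (r • (ω : V3))
      ∂(volume : Measure V3).toSphere) := by
  set ν := (volume : Measure V3).toSphere with hν
  set φ := fderiv ℝ g with hφ
  set ψ := fderiv ℝ φ with hψ
  have hgd : Differentiable ℝ g := hg.differentiable two_ne_zero
  have hφ1 : ContDiff ℝ 1 φ := hg.fderiv_right (by norm_num)
  have hφcont : Continuous φ := hφ1.continuous
  have hφd : Differentiable ℝ φ := hφ1.differentiable one_ne_zero
  have hψcont : Continuous ψ := hφ1.continuous_fderiv one_ne_zero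
  have hsupφ : HasCompactSupport φ := hgc.fderiv (𝕜 := ℝ)
  have hsupψ : HasCompactSupport ψ := hsupφ.fderiv (𝕜 := ℝ)
  obtain ⟨C₁, hC₁⟩ := hφcont.bounded_above_of_compact_support hsupφ
  obtain ⟨C₂, hC₂⟩ := (hφ1.continuous_fderiv one_ne_zero).bounded_above_of_compact_support hsupψ
  have hωn : ∀ ω : sphere (0 : V3) 1, ‖(ω : V3)‖ = 1 := fun ω =>
    mem_sphere_zero_iff_norm.mp ω.2
  -- pointwise derivatives
  have d1 : ∀ (w : V3) (x₀ : ℝ), HasDerivAt (fun x : ℝ => g (x • w)) (φ (x₀ • w) w) x₀ := by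
    intro w x₀
    have l1 : HasDerivAt (fun x : ℝ => x • w) w x₀ := by
      simpa using (hasDerivAt_id x₀).smul_const w
    exact ((hgd (x₀ • w)).hasFDerivAt).comp_hasDerivAt x₀ l1
  have d2 : ∀ (w : V3) (x₀ : ℝ),
      HasDerivAt (fun x : ℝ => φ (x • w) w) (ψ (x₀ • w) w w) x₀ := by
    intro w x₀
    have l1 : HasDerivAt (fun x : ℝ => x • w) w x₀ := by
      simpa using (hasDerivAt_id x₀).smul_const w
    have l2 : HasDerivAt (fun x : ℝ => φ (x • w)) (ψ (x₀ • w) w) x₀ :=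
      ((hφd (x₀ • w)).hasFDerivAt).comp_hasDerivAt x₀ l1
    simpa using l2.clm_apply (hasDerivAt_const x₀ w)
  -- continuity in ω
  have c0 : ∀ r : ℝ, Continuous fun ω : sphere (0 : V3) 1 => g (r • (ω : V3)) := fun r =>
    hg.continuous.comp (continuous_subtype_val.const_smul r)
  have c1 : ∀ r : ℝ, Continuous fun ω : sphere (0 : V3) 1 => φ (r • (ω : V3)) (ω : V3) :=
    fun r => (hφcont.comp (continuous_subtype_val.const_smul r)).clm_apply
      continuous_subtype_val
  have c2 : ∀ r : ℝ, Continuous fun ω : sphere (0 : V3) 1 =>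
      ψ (r • (ω : V3)) (ω : V3) (ω : V3) := fun r =>
    ((hψcont.comp (continuous_subtype_val.const_smul r)).clm_apply
      continuous_subtype_val).clm_apply continuous_subtype_val
  -- bounds
  have b1 : ∀ (r : ℝ) (ω : sphere (0 : V3) 1), ‖φ (r • (ω : V3)) (ω : V3)‖ ≤ C₁ := by
    intro r ω
    refine le_trans ((φ (r • (ω : V3))).le_opNorm _) ?_
    rw [hωn ω, mul_one]
    exact hC₁ _
  have b2 : ∀ (r : ℝ) (ω : sphere (0 : V3) 1), ‖ψ (r • (ω : V3)) (ω : V3) (ω : V3)‖ ≤ C₂ := by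
    intro r ω
    refine le_trans ((ψ (r • (ω : V3)) (ω : V3)).le_opNorm _) ?_
    rw [hωn ω, mul_one]
    refine le_trans ((ψ (r • (ω : V3))).le_opNorm _) ?_
    rw [hωn ω, mul_one]
    exact hC₂ _
  -- derivative of the sphere average
  have stepA : ∀ x₀ : ℝ, HasDerivAt (fun r : ℝ => ∫ ω : sphere (0 : V3) 1, g (r • (ω : V3)) ∂ν)
      (∫ ω : sphere (0 : V3) 1, φ (x₀ • (ω : V3)) (ω : V3) ∂ν) x₀ := by
    intro x₀
    exact (hasDerivAt_integral_of_dominated_loc_of_deriv_le (s := univ) univ_mem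
      (Eventually.of_forall fun x => (c0 x).aestronglyMeasurable)
      ((c0 x₀).integrable_of_hasCompactSupport ((isClosed_tsupport _).isCompact))
      ((c1 x₀).aestronglyMeasurable)
      (ae_of_all _ fun ω x _ => b1 x ω)
      (integrable_const C₁)
      (ae_of_all _ fun ω x _ => d1 ω x)).2
  have stepB : ∀ x₀ : ℝ,
      HasDerivAt (fun r : ℝ => ∫ ω : sphere (0 : V3) 1, φ (r • (ω : V3)) (ω : V3) ∂ν)
      (∫ ω : sphere (0 : V3) 1, ψ (x₀ • (ω : V3)) (ω : V3) (ω : V3) ∂ν) x₀ := by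
    intro x₀
    exact (hasDerivAt_integral_of_dominated_loc_of_deriv_le (s := univ) univ_mem
      (Eventually.of_forall fun x => (c1 x).aestronglyMeasurable)
      ((c1 x₀).integrable_of_hasCompactSupport ((isClosed_tsupport _).isCompact))
      ((c2 x₀).aestronglyMeasurable)
      (ae_of_all _ fun ω x _ => b2 x ω)
      (integrable_const C₂)
      (ae_of_all _ fun ω x _ => d2 ω x)).2
  have stepC : Continuous fun r : ℝ =>
      ∫ ω : sphere (0 : V3) 1, ψ (r • (ω : V3)) (ω : V3) (ω : V3) ∂ν := by
    refine continuous_of_dominated (fun x => (c2 x).aestronglyMeasurable)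
      (fun x => ae_of_all _ fun ω => b2 x ω) (integrable_const C₂)
      (ae_of_all _ fun ω => ?_)
    exact ((hψcont.comp (continuous_id.smul continuous_const)).clm_apply
      continuous_const).clm_apply continuous_const
  -- assemble
  have e1 : deriv (fun r : ℝ => ∫ ω : sphere (0 : V3) 1, g (r • (ω : V3)) ∂ν)
      = fun r : ℝ => ∫ ω : sphere (0 : V3) 1, φ (r • (ω : V3)) (ω : V3) ∂ν :=
    funext fun x => (stepA x).deriv
  have e2 : deriv (fun r : ℝ => ∫ ω : sphere (0 : V3) 1, φ (r • (ω : V3)) (ω : V3) ∂ν)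
      = fun r : ℝ => ∫ ω : sphere (0 : V3) 1, ψ (r • (ω : V3)) (ω : V3) (ω : V3) ∂ν :=
    funext fun x => (stepB x).deriv
  have h1cd : ContDiff ℝ 1 (fun r : ℝ => ∫ ω : sphere (0 : V3) 1, φ (r • (ω : V3)) (ω : V3) ∂ν) :=
    contDiff_one_iff_deriv.mpr ⟨fun x => (stepB x).differentiableAt, e2 ▸ stepC⟩
  have h2 : ContDiff ℝ (1 + 1) (fun r : ℝ => ∫ ω : sphere (0 : V3) 1, g (r • (ω : V3)) ∂ν) :=
    contDiff_succ_iff_deriv.mpr ⟨fun x => (stepA x).differentiableAt,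
      by simp, e1 ▸ h1cd⟩
  exact (by norm_num : (1 + 1 : WithTop ℕ∞) = 2) ▸ h2

/-- For `g : ℝ³ → E` twice continuously differentiable with compact support away from
the origin, the function `s ↦ ∫ e^{-is|k|} g(k) dk` is Bochner integrable on `ℝ`, and
`lim_{t→∞} ∫_{-t}^{t} (∫ e^{-is|k|} g(k) dk) ds` exists and equals its Bochner integral
over all of `ℝ`. -/
theorem time_integrability_of_oscillatory_integral
    {E : Type*} [NormedAddCommGroup E] [NormedSpace ℂ E] [CompleteSpace E]
    (g : EuclideanSpace ℝ (Fin 3) → E)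
    (hg : ContDiff ℝ 2 g)
    (hgc : HasCompactSupport g)
    (hg0 : (0 : EuclideanSpace ℝ (Fin 3)) ∉ tsupport g) :
    Integrable (fun s : ℝ => ∫ k : EuclideanSpace ℝ (Fin 3),
        Complex.exp (-(Complex.I * (s : ℂ) * ((‖k‖ : ℝ) : ℂ))) • g k) ∧
    Tendsto
      (fun t : ℝ => ∫ s in (-t)..t, ∫ k : EuclideanSpace ℝ (Fin 3),
        Complex.exp (-(Complex.I * (s : ℂ) * ((‖k‖ : ℝ) : ℂ))) • g k)
      atTop
      (𝓝 (∫ s : ℝ, ∫ k : EuclideanSpace ℝ (Fin 3),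
        Complex.exp (-(Complex.I * (s : ℂ) * ((‖k‖ : ℝ) : ℂ))) • g k)) := by
  set F : ℝ → E := fun s => ∫ k : V3,
      Complex.exp (-(Complex.I * (s : ℂ) * ((‖k‖ : ℝ) : ℂ))) • g k with hF
  -- the radius `a` below which `g` vanishes
  obtain ⟨a, a_pos, ha⟩ : ∃ a > 0, ball (0 : V3) a ⊆ (tsupport g)ᶜ :=
    Metric.isOpen_iff.mp (isClosed_tsupport g).isOpen_compl 0 hg0
  have hsmall : ∀ x : V3, ‖x‖ < a → g x = 0 := fun x hx =>
    image_eq_zero_of_notMem_tsupport (ha (by simpa [mem_ball, dist_eq_norm] using hx))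
  obtain ⟨R, hR⟩ : ∃ R, tsupport g ⊆ closedBall 0 R :=
    hgc.isBounded.subset_closedBall 0
  have hbig : ∀ x : V3, R < ‖x‖ → g x = 0 := by
    intro x hx
    by_contra hne
    have := hR (subset_tsupport g (by simpa using hne))
    simp only [mem_closedBall, dist_eq_norm, sub_zero] at this
    exact absurd this (not_le.mpr hx)
  -- the radial profile
  set ν := (volume : Measure V3).toSphere with hν
  set h : ℝ → E := fun r => ∫ ω : sphere (0 : V3) 1, g (r • (ω : V3)) ∂ν with hh
  have hhcd : ContDiff ℝ 2 h := sphere_avg_contDiff g hg hgc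
  set P : ℝ → E := fun r => (r ^ 2 : ℝ) • h r with hP
  have hPcd : ContDiff ℝ 2 P := (contDiff_id.pow 2).smul hhcd
  set H : ℝ → E := Set.indicator (Set.Ioi (0:ℝ)) P with hH
  have hzero : ∀ r : ℝ, r < a → H r = 0 := by
    intro r hr
    rcases le_or_gt r 0 with h0 | h0
    · exact Set.indicator_of_notMem (by simpa using h0) P
    · rw [hH, Set.indicator_of_mem (Set.mem_Ioi.mpr h0), hP]
      have : (fun ω : sphere (0 : V3) 1 => g (r • (ω : V3))) = fun _ => 0 := by
        funext ω
        refine hsmall _ ?_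
        rw [norm_smul, mem_sphere_zero_iff_norm.mp ω.2, mul_one, Real.norm_eq_abs,
          abs_of_pos h0]
        exact hr
      simp only [hh, this, integral_zero, smul_zero]
  have hbigzero : ∀ r : ℝ, R < r → H r = 0 := by
    intro r hr
    rcases le_or_gt r 0 with h0 | h0
    · exact Set.indicator_of_notMem (by simpa using h0) P
    · rw [hH, Set.indicator_of_mem (Set.mem_Ioi.mpr h0), hP]
      have : (fun ω : sphere (0 : V3) 1 => g (r • (ω : V3))) = fun _ => 0 := by
        funext ω
        refine hbig _ ?_
        rw [norm_smul, mem_sphere_zero_iff_norm.mp ω.2, mul_one, Real.norm_eq_abs,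
          abs_of_pos h0]
        exact hr
      simp only [hh, this, integral_zero, smul_zero]
  have hHcd : ContDiff ℝ 2 H := by
    rw [contDiff_iff_contDiffAt]
    intro x
    rcases lt_or_ge x a with hx | hx
    · exact contDiffAt_const.congr_of_eventuallyEq <|
        Filter.eventuallyEq_of_mem (isOpen_Iio.mem_nhds hx) fun r hr => hzero r hr
    · have hx0 : (0:ℝ) < x := lt_of_lt_of_le a_pos hx
      exact hPcd.contDiffAt.congr_of_eventuallyEq <|
        Filter.eventuallyEq_of_mem (isOpen_Ioi.mem_nhds hx0) fun r hr =>
          Set.indicator_of_mem hr P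
  have hHsupp : HasCompactSupport H := by
    refine HasCompactSupport.intro (isCompact_Icc (a := -(|R|+1)) (b := |R|+1)) fun x hx => ?_
    simp only [Set.mem_Icc, not_and_or, not_le] at hx
    rcases hx with hx | hx
    · exact hzero x (by linarith [abs_nonneg R])
    · exact hbigzero x (by linarith [le_abs_self R])
  have hHcont : Continuous H := hHcd.continuous
  have hHint : Integrable H := hHcont.integrable_of_hasCompactSupport hHsupp
  obtain ⟨hHdiff, -, hH1cd⟩ := contDiff_succ_iff_deriv.mp
    ((by norm_num : (2 : WithTop ℕ∞) = 1 + 1) ▸ hHcd)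
  obtain ⟨hH'diff, hH''cont⟩ := contDiff_one_iff_deriv.mp hH1cd
  have hH'supp : HasCompactSupport (deriv H) := hHsupp.deriv
  have hH''supp : HasCompactSupport (deriv (deriv H)) := hH'supp.deriv
  have hH'int : Integrable (deriv H) :=
    (hH1cd.continuous).integrable_of_hasCompactSupport hH'supp
  have hH''int : Integrable (deriv (deriv H)) :=
    hH''cont.integrable_of_hasCompactSupport hH''supp
  -- integrability of the oscillatory integrand in `k`
  have hfs : ∀ s : ℝ, Integrable
      (fun k : V3 => Complex.exp (-(Complex.I * (s:ℂ) * (‖k‖:ℂ))) • g k) := by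
    intro s
    have hcont : Continuous fun k : V3 =>
        Complex.exp (-(Complex.I * (s:ℂ) * (‖k‖:ℂ))) • g k := by
      refine Continuous.smul (Complex.continuous_exp.comp (by fun_prop)) hg.continuous
    exact hcont.integrable_of_hasCompactSupport hgc.smul_left
  -- the key identity: `F s` is a 1D oscillatory integral of `H`
  have unit_exp : ∀ s r : ℝ, ‖Complex.exp (-(Complex.I * (s:ℂ) * (r:ℂ)))‖ = 1 := by
    intro s r
    have : -(Complex.I * (s:ℂ) * (r:ℂ)) = ((-(s*r) : ℝ) : ℂ) * Complex.I := by
      push_cast; ring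
    rw [this]
    exact Complex.norm_exp_ofReal_mul_I _
  have key : ∀ s : ℝ, F s = ∫ r : ℝ, Complex.exp (-(Complex.I * (s:ℂ) * (r:ℂ))) • H r := by
    intro s
    simp only [hF]
    rw [polar3 _ (hfs s)]
    have step : ∫ r : ℝ, Complex.exp (-(Complex.I * (s:ℂ) * (r:ℂ))) • H r
        = ∫ r in Set.Ioi (0:ℝ), Complex.exp (-(Complex.I * (s:ℂ) * (r:ℂ))) • H r :=
      (setIntegral_eq_integral_of_forall_compl_eq_zero fun r hr => by
        rw [hH, Set.indicator_of_notMem hr, smul_zero]).symm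
    rw [step]
    refine setIntegral_congr_fun measurableSet_Ioi fun r hr => ?_
    have hr0 : (0:ℝ) < r := hr
    have hin : (fun ω : sphere (0 : V3) 1 =>
        Complex.exp (-(Complex.I * (s:ℂ) * (‖r • (ω:V3)‖:ℂ))) • g (r • (ω:V3)))
        = fun ω : sphere (0 : V3) 1 =>
          Complex.exp (-(Complex.I * (s:ℂ) * (r:ℂ))) • g (r • (ω:V3)) := by
      funext ω
      rw [norm_smul, mem_sphere_zero_iff_norm.mp ω.2, mul_one, Real.norm_eq_abs,
        abs_of_pos hr0]
    rw [hin, integral_smul, hH, Set.indicator_of_mem hr, hP]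
    exact smul_comm _ _ _
  have keyF : ∀ s : ℝ, F s = 𝓕 H (s / (2 * π)) := by
    intro s
    rw [key s, Real.fourier_real_eq_integral_exp_smul]
    refine integral_congr_ae (Eventually.of_forall fun v => ?_)
    have harg : ((-2 * π * v * (s / (2 * π)) : ℝ) : ℂ) * Complex.I
        = -(Complex.I * (s:ℂ) * (v:ℂ)) := by
      have h1 : -2 * π * v * (s / (2 * π)) = -(v * s) := by field_simp
      rw [h1]; push_cast; ring
    simp only [harg]
  -- continuity of `F`
  have hFcont : Continuous F := by
    simp only [hF]
    refine continuous_of_dominated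
      (F := fun (s : ℝ) (k : V3) => Complex.exp (-(Complex.I * (s:ℂ) * (‖k‖:ℂ))) • g k)
      (bound := fun k => ‖g k‖)
      (fun s => (Continuous.smul (Complex.continuous_exp.comp (by fun_prop))
        hg.continuous).aestronglyMeasurable)
      (fun s => ae_of_all _ fun k => ?_)
      (hg.continuous.norm.integrable_of_hasCompactSupport hgc.norm)
      (ae_of_all _ fun k => Continuous.smul (Complex.continuous_exp.comp (by fun_prop))
        continuous_const)
    simp only [norm_smul, unit_exp, one_mul]
    exact le_refl _
  -- bounds
  set M := ∫ k : V3, ‖g k‖ with hM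
  have hM0 : 0 ≤ M := integral_nonneg fun k => norm_nonneg _
  have hFleM : ∀ s, ‖F s‖ ≤ M := by
    intro s
    simp only [hF, hM]
    refine le_trans (norm_integral_le_integral_norm _) (le_of_eq ?_)
    refine integral_congr_ae (Eventually.of_forall fun k => ?_)
    simp only [norm_smul, unit_exp, one_mul]
  set C2 := ∫ r : ℝ, ‖deriv (deriv H) r‖ with hC2
  have hC20 : 0 ≤ C2 := integral_nonneg fun _ => norm_nonneg _
  have e1 := Real.fourier_deriv hHint hHdiff hH'int
  have e2 := Real.fourier_deriv hH'int hH'diff hH''int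
  have hdecay : ∀ s : ℝ, s ≠ 0 → ‖F s‖ ≤ C2 / s ^ 2 := by
    intro s hs
    have hπ : (0:ℝ) < 2 * π := by positivity
    have hs2 : (0:ℝ) < s ^ 2 := (sq_abs s) ▸ pow_pos (abs_pos.mpr hs) 2
    set ξ : ℝ := s / (2 * π) with hξdef
    have hnc : ‖((2:ℂ) * (π:ℂ) * Complex.I * (ξ:ℂ))‖ = |s| := by
      simp only [norm_mul, Complex.norm_I, mul_one, Complex.norm_real,
        Complex.norm_ofNat, Real.norm_eq_abs]
      rw [hξdef, abs_div, abs_of_pos Real.pi_pos, abs_of_pos hπ]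
      field_simp
    have hee := congrFun e2 ξ
    rw [congrFun e1 ξ] at hee
    have hnn : ‖𝓕 (deriv (deriv H)) ξ‖
        = s ^ 2 * ‖𝓕 H ξ‖ := by
      rw [hee, norm_smul, norm_smul, hnc, ← mul_assoc, abs_mul_abs_self, ← sq]
    have hle : ‖𝓕 (deriv (deriv H)) ξ‖ ≤ C2 :=
      VectorFourier.norm_fourierIntegral_le_integral_norm _ _ _ _ _
    rw [keyF s, ← hξdef, le_div_iff₀ hs2]
    calc ‖𝓕 H ξ‖ * s ^ 2 = s ^ 2 * ‖𝓕 H ξ‖ := by ring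
      _ = ‖𝓕 (deriv (deriv H)) ξ‖ := hnn.symm
      _ ≤ C2 := hle
  have hbound : ∀ s : ℝ, ‖F s‖ ≤ (2 * (M + C2)) * (1 + s ^ 2)⁻¹ := by
    intro s
    have hpos : (0:ℝ) < 1 + s ^ 2 := by positivity
    rw [← div_eq_mul_inv, le_div_iff₀ hpos]
    rcases le_or_gt (s ^ 2) 1 with hs | hs
    · nlinarith [hFleM s, norm_nonneg (F s)]
    · have hs0 : s ≠ 0 := by
        intro hc; rw [hc] at hs; norm_num at hs
      have hd := hdecay s hs0
      have hs2 : (0:ℝ) < s ^ 2 := by linarith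
      have h3 : ‖F s‖ * s ^ 2 ≤ C2 := (le_div_iff₀ hs2).mp hd
      nlinarith [norm_nonneg (F s), h3, hs]
  have hInt : Integrable F := by
    refine ((integrable_inv_one_add_sq.const_mul (2 * (M + C2))).mono'
      hFcont.aestronglyMeasurable (ae_of_all _ fun s => ?_))
    simpa [mul_comm] using hbound s
  exact ⟨hInt, intervalIntegral_tendsto_integral hInt tendsto_neg_atTop_atBot tendsto_id⟩
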